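/- arXiv:math/0606727 — 3 statements merged into one kernel-verified Lean document; each statement's English description precedes it below -/
import Mathlib

section
/- Let D ⊂ ℂ^N be a bounded domain and let Φ : bD → ℂ^N \ {0} be a continuous map which extends holomorphically through D. Then the Brouwer degree of Φ is nonnegative. -/
open Set Metric Bornology MvPolynomial

noncomputable section

/-- An axiomatization of the Brouwer degree `deg f D y` of a continuous map
`f` on the closure of a bounded open set `D` with respect to a value `y ∉ f (frontier D)`,
via the classical normalization, additivity and homotopy-invariance axioms,
which determine the degree uniquely. -/
structure BrouwerDegreeTheory (E : Type*) [NormedAddCommGroup E] [NormedSpace ℝ E]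
    [FiniteDimensional ℝ E] where
  deg : (E → E) → Set E → E → ℤ
  normalization : ∀ (D : Set E) (y : E), IsOpen D → IsBounded D → y ∈ D → deg id D y = 1
  additivity : ∀ (f : E → E) (D D₁ D₂ : Set E) (y : E), IsOpen D → IsBounded D →
    ContinuousOn f (closure D) → IsOpen D₁ → IsOpen D₂ → D₁ ⊆ D → D₂ ⊆ D →
    Disjoint D₁ D₂ → y ∉ f '' (closure D \ (D₁ ∪ D₂)) →
    deg f D y = deg f D₁ y + deg f D₂ y
  homotopy_invariance : ∀ (H : ℝ → E → E) (D : Set E) (y : ℝ → E), IsOpen D → IsBounded D →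
    ContinuousOn (fun p : ℝ × E => H p.1 p.2) (Icc (0:ℝ) 1 ×ˢ closure D) →
    ContinuousOn y (Icc (0:ℝ) 1) →
    (∀ t ∈ Icc (0:ℝ) 1, ∀ x ∈ frontier D, H t x ≠ y t) →
    deg (H 0) D (y 0) = deg (H 1) D (y 1)

/-- A continuous map on the boundary of `D` extends holomorphically through `D`:
there is a map continuous on the closure of `D`, holomorphic on `D`, agreeing with `Φ`
on the boundary of `D`. -/
def ExtendsHolomorphically {E F : Type*} [NormedAddCommGroup E] [NormedSpace ℂ E]
    [NormedAddCommGroup F] [NormedSpace ℂ F] (Φ : E → F) (D : Set E) : Prop :=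
  ∃ g : E → F, ContinuousOn g (closure D) ∧ DifferentiableOn ℂ g D ∧
    ∀ z ∈ frontier D, g z = Φ z

/-- `D` has `C^k` boundary: near each boundary point there is a `C^k` defining function
with nonvanishing differential. -/
def HasCkBoundary {E : Type*} [NormedAddCommGroup E] [NormedSpace ℝ E]
    (k : ℕ∞) (D : Set E) : Prop :=
  ∀ p ∈ frontier D, ∃ (U : Set E) (ρ : E → ℝ), IsOpen U ∧ p ∈ U ∧
    ContDiffOn ℝ k ρ U ∧ (∀ x ∈ U, fderiv ℝ ρ x ≠ 0) ∧
    D ∩ U = {x ∈ U | ρ x < 0} ∧ frontier D ∩ U = {x ∈ U | ρ x = 0}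

/-- An open set `Ω ⊆ ℂ^N` is Stein iff it is holomorphically convex. -/
def IsStein {E : Type*} [NormedAddCommGroup E] [NormedSpace ℂ E] (Ω : Set E) : Prop :=
  IsOpen Ω ∧ ∀ K ⊆ Ω, IsCompact K →
    IsCompact {z ∈ Ω | ∀ f : E → ℂ, DifferentiableOn ℂ f Ω → ‖f z‖ ≤ ⨆ w : K, ‖f (w : E)‖}

/-- A compact set has a Stein neighbourhood basis if every neighbourhood of it contains
a Stein open neighbourhood of it. -/
def HasSteinNeighbourhoodBasis {E : Type*} [NormedAddCommGroup E] [NormedSpace ℂ E]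
    (K : Set E) : Prop :=
  ∀ U : Set E, IsOpen U → K ⊆ U → ∃ Ω : Set E, IsStein Ω ∧ K ⊆ Ω ∧ Ω ⊆ U


namespace BrouwerDegreeTheory

variable {E : Type*} [NormedAddCommGroup E] [NormedSpace ℝ E] [FiniteDimensional ℝ E]

lemma deg_empty (𝒟 : BrouwerDegreeTheory E) (f : E → E) (y : E) : 𝒟.deg f ∅ y = 0 := by
  have h := 𝒟.additivity f ∅ ∅ ∅ y isOpen_empty isBounded_empty
    (by simp [continuousOn_empty]) isOpen_empty isOpen_empty subset_rfl subset_rfl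
    (by simp) (by simp)
  omega

lemma deg_eq_of_linear_homotopy (𝒟 : BrouwerDegreeTheory E) {D : Set E} (hD : IsOpen D)
    (hb : IsBounded D) {f g : E → E} (hf : ContinuousOn f (closure D))
    (hg : ContinuousOn g (closure D)) {y : E}
    (hne : ∀ t ∈ Icc (0:ℝ) 1, ∀ z ∈ frontier D, (1 - t) • f z + t • g z ≠ y) :
    𝒟.deg f D y = 𝒟.deg g D y := by
  have hcont : ContinuousOn (fun p : ℝ × E => (1 - p.1) • f p.2 + p.1 • g p.2)
      (Icc (0:ℝ) 1 ×ˢ closure D) := by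
    apply ContinuousOn.add
    · exact ((continuous_const.sub continuous_fst).continuousOn).smul
        (hf.comp continuous_snd.continuousOn (fun p hp => hp.2))
    · exact (continuous_fst.continuousOn).smul
        (hg.comp continuous_snd.continuousOn (fun p hp => hp.2))
  have h := 𝒟.homotopy_invariance (fun t z => (1 - t) • f z + t • g z) D (fun _ => y)
    hD hb hcont continuousOn_const hne
  have h0 : (fun z => (1 - (0:ℝ)) • f z + (0:ℝ) • g z) = f := by funext z; simp
  have h1 : (fun z => (1 - (1:ℝ)) • f z + (1:ℝ) • g z) = g := by funext z; simp
  beta_reduce at h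
  rw [h0, h1] at h
  exact h



variable {E : Type*} [NormedAddCommGroup E] [NormedSpace ℂ E] [FiniteDimensional ℂ E]

lemma LinearMap.injective_of_det_ne_zero' {𝕜 : Type*} [Field 𝕜] {M : Type*} [AddCommGroup M]
    [Module 𝕜 M] [FiniteDimensional 𝕜 M] (f : M →ₗ[𝕜] M) (hf : LinearMap.det f ≠ 0) :
    Function.Injective f := by
  have h := (LinearMap.equivOfDetNeZero f hf).injective
  have hc : ⇑(LinearMap.equivOfDetNeZero f hf) = ⇑f := by
    have := LinearEquiv.coe_ofIsUnitDet (f := f)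
      (v := Module.finBasis 𝕜 M) (v' := Module.finBasis 𝕜 M)
      (h := by rw [LinearMap.det_toMatrix]; exact isUnit_iff_ne_zero.2 hf)
    exact congrArg DFunLike.coe this
  rwa [hc] at h

lemma exists_glpath (A : E →L[ℂ] E) (hdet : LinearMap.det (↑A : E →ₗ[ℂ] E) ≠ 0) :
    ∃ γ : ℝ → ℂ, Continuous γ ∧ γ 0 = 0 ∧ γ 1 = 1 ∧ ∀ t ∈ Icc (0:ℝ) 1,
      Function.Injective ⇑(((↑A : E →ₗ[ℂ] E) + γ t • (LinearMap.id - (↑A : E →ₗ[ℂ] E)) : E →ₗ[ℂ] E)) := by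
  classical
  set b := Module.finBasis ℂ E
  set M := LinearMap.toMatrix b b (↑A : E →ₗ[ℂ] E) with hM
  set P : Matrix _ _ (Polynomial ℂ) :=
    fun i j => Polynomial.C (M i j) + Polynomial.X * Polynomial.C ((1 : Matrix _ _ ℂ) i j - M i j)
    with hP
  set q : Polynomial ℂ := P.det with hq
  have heval : ∀ s : ℂ,
      q.eval s = LinearMap.det ((↑A : E →ₗ[ℂ] E) + s • (LinearMap.id - (↑A : E →ₗ[ℂ] E))) := by
    intro s
    have h1 : q.eval s = (P.map (Polynomial.evalRingHom s)).det := by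
      rw [hq, ← Polynomial.coe_evalRingHom, RingHom.map_det, RingHom.mapMatrix_apply]
    have h2 : P.map (Polynomial.evalRingHom s) = M + s • ((1 : Matrix _ _ ℂ) - M) := by
      ext i j
      rw [Matrix.map_apply]
      simp only [hP, Matrix.map_apply, Matrix.add_apply, Matrix.smul_apply, Matrix.sub_apply,
        Polynomial.coe_evalRingHom, Polynomial.eval_add, Polynomial.eval_mul, Polynomial.eval_C,
        Polynomial.eval_X, smul_eq_mul]
    have h3 : LinearMap.toMatrix b b ((↑A : E →ₗ[ℂ] E) + s • (LinearMap.id - (↑A : E →ₗ[ℂ] E)))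
        = M + s • ((1 : Matrix _ _ ℂ) - M) := by
      simp [map_add, map_smul, map_sub, LinearMap.toMatrix_id, hM]
    rw [h1, h2, ← h3, LinearMap.det_toMatrix]
  have hq0 : q.eval 0 ≠ 0 := by
    rw [heval 0]
    simpa using hdet
  have hq1 : q.eval 1 ≠ 0 := by
    rw [heval 1]
    have : (↑A : E →ₗ[ℂ] E) + (1:ℂ) • (LinearMap.id - (↑A : E →ₗ[ℂ] E)) = LinearMap.id := by
      simp
    rw [this, LinearMap.det_id]
    exact one_ne_zero
  have hqne : q ≠ 0 := fun h => hq1 (by simp [h])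
  have hfin : {s : ℂ | q.IsRoot s}.Finite := Polynomial.finite_setOf_isRoot hqne
  have hpc : IsPathConnected ({s : ℂ | q.IsRoot s}ᶜ) := by
    apply hfin.countable.isPathConnected_compl_of_one_lt_rank
    rw [Complex.rank_real_complex]
    norm_num
  have hJ : JoinedIn ({s : ℂ | q.IsRoot s}ᶜ) 0 1 := hpc.joinedIn 0 hq0 1 hq1
  obtain ⟨γ, hγ⟩ := hJ
  refine ⟨γ.extend, γ.continuous_extend, by simp, by simp, ?_⟩
  intro t ht
  have hmem : γ.extend t ∈ ({s : ℂ | q.IsRoot s}ᶜ) := by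
    rw [γ.extend_apply ht]
    exact hγ _
  apply LinearMap.injective_of_det_ne_zero'
  rw [← heval]
  exact hmem

section AuxBall

variable {E : Type*} [NormedAddCommGroup E] [NormedSpace ℝ E] [NormedSpace ℂ E]
  [IsScalarTower ℝ ℂ E] [FiniteDimensional ℝ E] [FiniteDimensional ℂ E]

lemma aux_ball_deg (𝒟 : BrouwerDegreeTheory E) (g : E → E) (p c : E) (A : E →L[ℂ] E)
    (hdet : LinearMap.det (↑A : E →ₗ[ℂ] E) ≠ 0) {r Kp : ℝ} (hr : 0 < r) (hKp : 0 < Kp)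
    (hAK : ∀ w : E, ‖w‖ ≤ Kp * ‖A w‖)
    (hgc : ContinuousOn g (closedBall p r))
    (happrox : ∀ z ∈ closedBall p r, ‖g z - c - A (z - p)‖ ≤ (2 * Kp)⁻¹ * ‖z - p‖) :
    𝒟.deg g (ball p r) c = 1 := by
  have hrne : r ≠ 0 := hr.ne'
  have hcl : closure (ball p r) = closedBall p r := closure_ball p hrne
  have hfr : frontier (ball p r) = sphere p r := frontier_ball p hrne
  -- Step 1 : linear homotopy from g to the affine map z ↦ A (z - p) + c
  have step1 : 𝒟.deg g (ball p r) c = 𝒟.deg (fun z => A (z - p) + c) (ball p r) c := by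
    apply 𝒟.deg_eq_of_linear_homotopy (g := fun z => A (z - p) + c) isOpen_ball isBounded_ball
      (by rw [hcl]; exact hgc)
      ((A.continuous.comp (continuous_id.sub continuous_const)).add
        continuous_const).continuousOn
    intro t ht z hz hEq
    rw [hfr] at hz
    have hzc : z ∈ closedBall p r := sphere_subset_closedBall hz
    have hwr : ‖z - p‖ = r := by rw [← dist_eq_norm]; exact mem_sphere.1 hz
    have key : A (z - p) + (1 - t) • (g z - c - A (z - p)) = 0 := by
      have hmod : A (z - p) + (1 - t) • (g z - c - A (z - p))
          = ((1 - t) • g z + t • (A (z - p) + c)) - c := by module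
      rw [hmod, hEq, sub_self]
    have h1 : ‖A (z - p)‖ = ‖(1 - t) • (g z - c - A (z - p))‖ :=
      (congrArg norm (eq_neg_of_add_eq_zero_left key)).trans (norm_neg _)
    have hb := happrox z hzc
    rw [hwr] at hb
    have h2 : ‖(1 - t) • (g z - c - A (z - p))‖ ≤ (2 * Kp)⁻¹ * r := by
      rw [norm_smul, Real.norm_eq_abs]
      have habs : |1 - t| ≤ 1 := by
        rw [abs_le]; constructor <;> [linarith [ht.2]; linarith [ht.1]]
      calc |1 - t| * ‖g z - c - A (z - p)‖ ≤ 1 * ((2 * Kp)⁻¹ * r) :=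
            mul_le_mul habs hb (norm_nonneg _) zero_le_one
        _ = (2 * Kp)⁻¹ * r := one_mul _
    have h3 : r ≤ Kp * ‖A (z - p)‖ := by
      have := hAK (z - p); rwa [hwr] at this
    have hcontr : r ≤ r / 2 := by
      calc r ≤ Kp * ‖A (z - p)‖ := h3
        _ = Kp * ‖(1 - t) • (g z - c - A (z - p))‖ := by rw [h1]
        _ ≤ Kp * ((2 * Kp)⁻¹ * r) := mul_le_mul_of_nonneg_left h2 hKp.le
        _ = r / 2 := by field_simp
    linarith
  -- Step 2 : path of invertible complex-linear maps from A to the identity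
  obtain ⟨γ, hγc, hγ0, hγ1, hγinj⟩ := exists_glpath A hdet
  have step2 : 𝒟.deg (fun z => A (z - p) + c) (ball p r) c
      = 𝒟.deg (fun z => z - (p - c)) (ball p r) c := by
    have hcont : ContinuousOn
        (fun q : ℝ × E => A (q.2 - p) + γ q.1 • ((q.2 - p) - A (q.2 - p)) + c)
        (Icc (0:ℝ) 1 ×ˢ closure (ball p r)) := by
      apply Continuous.continuousOn
      have hA2 : Continuous fun q : ℝ × E => A (q.2 - p) :=
        A.continuous.comp (continuous_snd.sub continuous_const)
      exact (hA2.add ((hγc.comp continuous_fst).smul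
        ((continuous_snd.sub continuous_const).sub hA2))).add continuous_const
    have hne : ∀ t ∈ Icc (0:ℝ) 1, ∀ z ∈ frontier (ball p r),
        A (z - p) + γ t • ((z - p) - A (z - p)) + c ≠ (fun _ : ℝ => c) t := by
      intro t ht z hz hEq
      rw [hfr] at hz
      have hzp : z - p ≠ 0 := by
        have : dist z p = r := mem_sphere.1 hz
        intro h0
        rw [sub_eq_zero] at h0
        subst h0
        simp at this
        exact hrne this.symm
      have hX : A (z - p) + γ t • ((z - p) - A (z - p)) = 0 := by
        have := hEq
        simp only at this
        rwa [add_eq_right] at this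
      set L : E →ₗ[ℂ] E := (A : E →ₗ[ℂ] E) + γ t • (LinearMap.id - (A : E →ₗ[ℂ] E)) with hL
      have happ : L (z - p) = A (z - p) + γ t • ((z - p) - A (z - p)) := by
        simp only [hL, LinearMap.add_apply, LinearMap.smul_apply, LinearMap.sub_apply,
          LinearMap.id_apply, ContinuousLinearMap.coe_coe]
      have h0 : L (z - p) = L 0 := by rw [happ, hX, map_zero]
      exact hzp ((hγinj t ht) h0)
    have h := 𝒟.homotopy_invariance
      (fun t z => A (z - p) + γ t • ((z - p) - A (z - p)) + c) (ball p r) (fun _ => c)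
      isOpen_ball isBounded_ball hcont continuousOn_const hne
    beta_reduce at h
    have e0 : (fun z => A (z - p) + γ 0 • ((z - p) - A (z - p)) + c)
        = fun z => A (z - p) + c := by
      funext z; rw [hγ0]; simp
    have e1 : (fun z => A (z - p) + γ 1 • ((z - p) - A (z - p)) + c)
        = fun z => z - (p - c) := by
      funext z; rw [hγ1, one_smul]; abel
    rw [e0, e1] at h
    exact h
  -- Step 3 : moving-target homotopy to the identity, and normalization
  have step3 : (1 : ℤ) = 𝒟.deg (fun z => z - (p - c)) (ball p r) c := by
    have hcont : ContinuousOn (fun q : ℝ × E => q.2 - q.1 • (p - c))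
        (Icc (0:ℝ) 1 ×ˢ closure (ball p r)) :=
      (continuous_snd.sub (continuous_fst.smul continuous_const)).continuousOn
    have hycont : ContinuousOn (fun t : ℝ => p - t • (p - c)) (Icc (0:ℝ) 1) :=
      (continuous_const.sub (continuous_id.smul continuous_const)).continuousOn
    have hne : ∀ t ∈ Icc (0:ℝ) 1, ∀ z ∈ frontier (ball p r),
        z - t • (p - c) ≠ p - t • (p - c) := by
      intro t ht z hz hEq
      rw [hfr] at hz
      have : z = p := by
        have := sub_left_injective hEq
        exact this
      subst this
      have : dist z z = r := mem_sphere.1 hz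
      simp at this
      exact hrne this.symm
    have h := 𝒟.homotopy_invariance (fun t z => z - t • (p - c)) (ball p r)
      (fun t => p - t • (p - c)) isOpen_ball isBounded_ball hcont hycont hne
    beta_reduce at h
    have e0 : (fun z : E => z - (0:ℝ) • (p - c)) = id := by funext z; simp
    have e1 : (fun z : E => z - (1:ℝ) • (p - c)) = fun z => z - (p - c) := by
      funext z; simp
    have ey0 : p - (0:ℝ) • (p - c) = p := by simp
    have ey1 : p - (1:ℝ) • (p - c) = c := by simp
    rw [e0, e1, ey0, ey1] at h
    rw [← h]
    exact (𝒟.normalization (ball p r) p isOpen_ball isBounded_ball (mem_ball_self hr)).symm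
  rw [step1, step2, ← step3]

end AuxBall

section Main

open MeasureTheory

variable {E : Type*} [NormedAddCommGroup E] [NormedSpace ℝ E] [NormedSpace ℂ E]
  [IsScalarTower ℝ ℂ E] [FiniteDimensional ℝ E] [FiniteDimensional ℂ E]

lemma deg_nonneg_of_holo (𝒟 : BrouwerDegreeTheory E) {D : Set E} (hDopen : IsOpen D)
    (hDbdd : IsBounded D) {g : E → E} (hgc : ContinuousOn g (closure D))
    (hg : DifferentiableOn ℂ g D) {ε : ℝ} (hε : 0 < ε)
    (hfr : ∀ z ∈ frontier D, ε ≤ ‖g z‖) : 0 ≤ 𝒟.deg g D 0 := by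
  classical
  letI : MeasurableSpace E := borel E
  haveI : BorelSpace E := ⟨rfl⟩
  set μ : Measure E := (Module.finBasis ℝ E).addHaar with hμ
  have hA : ∀ x ∈ D, HasFDerivAt g (fderiv ℂ g x) x := fun x hx =>
    (hg.differentiableAt (hDopen.mem_nhds hx)).hasFDerivAt
  set Crit : Set E := {x ∈ D | LinearMap.det ((fderiv ℂ g x : E →ₗ[ℂ] E)) = 0} with hCrit
  -- Baby Sard : the set of critical values is null
  have hsard : μ (g '' Crit) = 0 := by
    apply addHaar_image_eq_zero_of_det_fderivWithin_eq_zero μ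
      (f' := fun x => (fderiv ℂ g x).restrictScalars ℝ)
      (fun x hx => ((hA x hx.1).restrictScalars ℝ).hasFDerivWithinAt)
    intro x hx
    by_contra hne
    have hdetR : LinearMap.det ((((fderiv ℂ g x).restrictScalars ℝ) : E →ₗ[ℝ] E)) ≠ 0 := hne
    have hinjR := LinearMap.injective_of_det_ne_zero' _ hdetR
    have hinj : Function.Injective ⇑((fderiv ℂ g x : E →ₗ[ℂ] E)) := by
      intro a b hab
      apply hinjR
      simpa using hab
    have hsurj := (LinearMap.injective_iff_surjective).mp hinj
    have hu : IsUnit (LinearMap.det ((fderiv ℂ g x : E →ₗ[ℂ] E))) := by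
      have hu := (LinearEquiv.ofBijective ((fderiv ℂ g x : E →ₗ[ℂ] E))
        ⟨hinj, hsurj⟩).isUnit_det'
      have heq : ((LinearEquiv.ofBijective ((fderiv ℂ g x : E →ₗ[ℂ] E))
          ⟨hinj, hsurj⟩) : E →ₗ[ℂ] E) = (fderiv ℂ g x : E →ₗ[ℂ] E) :=
        LinearMap.ext fun _ => rfl
      rwa [heq] at hu
    exact hu.ne_zero hx.2
  -- choose a small regular value c
  obtain ⟨c, hcball, hcreg⟩ : ∃ c ∈ ball (0:E) ε, c ∉ g '' Crit := by
    by_contra hcon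
    push_neg at hcon
    have hsub : ball (0:E) ε ⊆ g '' Crit := hcon
    have hpos : 0 < μ (ball (0:E) ε) := measure_ball_pos μ 0 hε
    have : μ (ball (0:E) ε) = 0 := le_antisymm (hsard ▸ measure_mono hsub) zero_le
    exact hpos.ne' this
  have hcnorm : ‖c‖ < ε := mem_ball_zero_iff.mp hcball
  -- step 0 : move the target from 0 to c
  have step0 : 𝒟.deg g D 0 = 𝒟.deg g D c := by
    have h := 𝒟.homotopy_invariance (fun _ z => g z) D (fun t => t • c) hDopen hDbdd
      (hgc.comp continuous_snd.continuousOn (fun q hq => hq.2))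
      ((continuous_id.smul continuous_const).continuousOn) ?_
    · beta_reduce at h
      rw [zero_smul, one_smul] at h
      exact h
    · intro t ht z hz hEq
      have hEq' : g z = t • c := hEq
      have h1 : ε ≤ ‖g z‖ := hfr z hz
      rw [hEq'] at h1
      rw [norm_smul, Real.norm_eq_abs, abs_of_nonneg ht.1] at h1
      nlinarith [ht.2, norm_nonneg c]
  -- the fiber over c
  set S : Set E := {z ∈ closure D | g z = c} with hS
  have hSD : S ⊆ D := by
    intro z hz
    by_cases hzD : z ∈ D
    · exact hzD
    · exfalso
      have hzfr : z ∈ frontier D := by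
        rw [hDopen.frontier_eq]
        exact ⟨hz.1, hzD⟩
      have := hfr z hzfr
      rw [hz.2] at this
      linarith
  have hSclosed : IsClosed S := by
    have : S = closure D ∩ g ⁻¹' {c} := by
      ext z; simp [hS]
    rw [this]
    exact hgc.preimage_isClosed_of_isClosed isClosed_closure isClosed_singleton
  have hScomp : IsCompact S := IsCompact.of_isClosed_subset
    (hDbdd.isCompact_closure) hSclosed (fun z hz => hz.1)
  -- pointwise data at each fiber point
  have hpt : ∀ p ∈ S, ∃ δ : ℝ, 0 < δ ∧ ∃ Kp : ℝ, 0 < Kp ∧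
      closedBall p δ ⊆ D ∧
      LinearMap.det ((fderiv ℂ g p : E →ₗ[ℂ] E)) ≠ 0 ∧
      (∀ w : E, ‖w‖ ≤ Kp * ‖(fderiv ℂ g p) w‖) ∧
      (∀ z ∈ closedBall p δ, ‖g z - c - (fderiv ℂ g p) (z - p)‖ ≤ (2 * Kp)⁻¹ * ‖z - p‖) := by
    intro p hp
    have hpD : p ∈ D := hSD hp
    have hdet : LinearMap.det ((fderiv ℂ g p : E →ₗ[ℂ] E)) ≠ 0 := by
      intro h0
      exact hcreg ⟨p, ⟨hpD, h0⟩, hp.2⟩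
    -- build the continuous linear equivalence
    have hinj := LinearMap.injective_of_det_ne_zero' _ hdet
    have hsurj := (LinearMap.injective_iff_surjective).mp hinj
    let eℓ : E ≃ₗ[ℂ] E := LinearEquiv.ofBijective ((fderiv ℂ g p : E →ₗ[ℂ] E)) ⟨hinj, hsurj⟩
    let e : E ≃L[ℂ] E := eℓ.toContinuousLinearEquiv
    set Kp : ℝ := ‖(e.symm : E →L[ℂ] E)‖ + 1 with hKp
    have hKpos : 0 < Kp := by positivity
    have hbound : ∀ w : E, ‖w‖ ≤ Kp * ‖(fderiv ℂ g p) w‖ := by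
      intro w
      have hw : w = e.symm ((fderiv ℂ g p) w) := by
        have : e w = (fderiv ℂ g p) w := rfl
        rw [← this, ContinuousLinearEquiv.symm_apply_apply]
      calc ‖w‖ = ‖e.symm ((fderiv ℂ g p) w)‖ := by rw [← hw]
        _ ≤ ‖(e.symm : E →L[ℂ] E)‖ * ‖(fderiv ℂ g p) w‖ :=
            (e.symm : E →L[ℂ] E).le_opNorm _
        _ ≤ Kp * ‖(fderiv ℂ g p) w‖ := by
            apply mul_le_mul_of_nonneg_right _ (norm_nonneg _)
            rw [hKp]; linarith
    -- little-o estimate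
    have hlo := ((hA p hpD).isLittleO).def (by positivity : (0:ℝ) < (2 * Kp)⁻¹)
    rw [Metric.eventually_nhds_iff] at hlo
    obtain ⟨r₁, hr₁, hball₁⟩ := hlo
    obtain ⟨r₂, hr₂, hball₂⟩ := Metric.isOpen_iff.mp hDopen p hpD
    refine ⟨min (r₁ / 2) (r₂ / 2), by positivity, Kp, hKpos, ?_, hdet, hbound, ?_⟩
    · intro z hz
      apply hball₂
      have := mem_closedBall.mp hz
      rw [mem_ball]
      calc dist z p ≤ min (r₁ / 2) (r₂ / 2) := this
        _ ≤ r₂ / 2 := min_le_right _ _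
        _ < r₂ := by linarith
    · intro z hz
      have hdz : dist z p < r₁ := by
        have := mem_closedBall.mp hz
        calc dist z p ≤ min (r₁ / 2) (r₂ / 2) := this
          _ ≤ r₁ / 2 := min_le_left _ _
          _ < r₁ := by linarith
      have := hball₁ hdz
      rw [hp.2] at this
      simpa using this
  choose! δ hδpos Kp hKpos hballD hdet hKbound happrox using hpt
  -- isolation of fiber points
  have hiso : ∀ p ∈ S, ∀ z ∈ closedBall p (δ p), g z = c → z = p := by
    intro p hp z hz hgz
    have h1 := happrox p hp z hz
    rw [hgz, sub_self, zero_sub, norm_neg] at h1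
    have h2 := hKbound p hp (z - p)
    have hK := hKpos p hp
    have hhalf : Kp p * (2 * Kp p)⁻¹ = 1 / 2 := by
      field_simp
    have h3 : ‖z - p‖ ≤ 1 / 2 * ‖z - p‖ := by
      calc ‖z - p‖ ≤ Kp p * ‖(fderiv ℂ g p) (z - p)‖ := h2
        _ ≤ Kp p * ((2 * Kp p)⁻¹ * ‖z - p‖) := mul_le_mul_of_nonneg_left h1 hK.le
        _ = 1 / 2 * ‖z - p‖ := by rw [← mul_assoc, hhalf]
    have : ‖z - p‖ = 0 := le_antisymm (by linarith) (norm_nonneg _)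
    rw [norm_eq_zero, sub_eq_zero] at this
    exact this
  -- the fiber is finite
  have hSfin : S.Finite := by
    have hcover : S ⊆ ⋃ p ∈ S, ball p (δ p) := fun p hp =>
      mem_biUnion hp (mem_ball_self (hδpos p hp))
    obtain ⟨t, hts, htfin, htcover⟩ := hScomp.elim_finite_subcover_image
      (fun p hp => isOpen_ball) hcover
    apply htfin.subset
    intro z hz
    obtain ⟨p, hpt', hzp⟩ := mem_iUnion₂.mp (htcover hz)
    have : z = p := hiso p (hts hpt') z (ball_subset_closedBall hzp) hz.2
    rwa [this]
  -- a uniform radius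
  obtain ⟨r, hr0, hrδ, hrdist⟩ : ∃ r : ℝ, 0 < r ∧ (∀ p ∈ S, r ≤ δ p) ∧
      ∀ p ∈ S, ∀ q ∈ S, p ≠ q → 3 * r ≤ dist p q := by
    rcases hSfin.toFinset.eq_empty_or_nonempty with hT | hT
    · have hSe : ∀ p, p ∉ S := by
        intro p hp
        have := hSfin.mem_toFinset.mpr hp
        rw [hT] at this
        exact absurd this (Finset.notMem_empty p)
      exact ⟨1, one_pos, fun p hp => absurd hp (hSe p), fun p hp => absurd hp (hSe p)⟩
    · set T := hSfin.toFinset with hTdef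
      have hmemTS : ∀ p ∈ T, p ∈ S := fun p hp => hSfin.mem_toFinset.mp hp
      set r₁ := T.inf' hT δ with hr₁
      have hr₁pos : 0 < r₁ :=
        (Finset.lt_inf'_iff hT).mpr fun p hp => hδpos p (hmemTS p hp)
      by_cases h2 : T.offDiag.Nonempty
      · set r₂ := T.offDiag.inf' h2 (fun pq => dist pq.1 pq.2) / 3 with hr₂
        have hr₂pos : 0 < r₂ := by
          rw [hr₂]
          apply div_pos _ (by norm_num)
          apply (Finset.lt_inf'_iff h2).mpr
          rintro ⟨p, q⟩ hpq
          obtain ⟨hpT, hqT, hne⟩ := Finset.mem_offDiag.mp hpq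
          exact dist_pos.mpr hne
        refine ⟨min r₁ r₂, lt_min hr₁pos hr₂pos, ?_, ?_⟩
        · intro p hp
          exact le_trans (min_le_left _ _) (Finset.inf'_le δ (hSfin.mem_toFinset.mpr hp))
        · intro p hp q hq hne
          have hmem : (p, q) ∈ T.offDiag :=
            Finset.mem_offDiag.mpr ⟨hSfin.mem_toFinset.mpr hp, hSfin.mem_toFinset.mpr hq, hne⟩
          have h3 : r₂ ≤ dist p q / 3 := by
            rw [hr₂]
            exact div_le_div_of_nonneg_right
              (Finset.inf'_le (fun pq => dist pq.1 pq.2) hmem) (by norm_num)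
          have := min_le_right r₁ r₂
          linarith
      · refine ⟨r₁, hr₁pos, ?_, ?_⟩
        · intro p hp
          exact Finset.inf'_le δ (hSfin.mem_toFinset.mpr hp)
        · intro p hp q hq hne
          exact absurd ⟨(p, q), Finset.mem_offDiag.mpr
            ⟨hSfin.mem_toFinset.mpr hp, hSfin.mem_toFinset.mpr hq, hne⟩⟩ h2
  -- local degrees are 1
  have hloc : ∀ p ∈ S, 𝒟.deg g (ball p r) c = 1 := by
    intro p hp
    have hsubD : closedBall p r ⊆ D :=
      (closedBall_subset_closedBall (hrδ p hp)).trans (hballD p hp)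
    exact aux_ball_deg 𝒟 g p c (fderiv ℂ g p) (hdet p hp) hr0 (hKpos p hp) (hKbound p hp)
      (hgc.mono (hsubD.trans subset_closure))
      (fun z hz => happrox p hp z (closedBall_subset_closedBall (hrδ p hp) hz))
  -- generalities about unions of the small balls
  have hU'D : ∀ s : Finset E, ↑s ⊆ S → (⋃ p ∈ (s : Set E), ball p r) ⊆ D := by
    intro s hs
    apply iUnion₂_subset
    intro p hp
    exact ball_subset_closedBall.trans
      ((closedBall_subset_closedBall (hrδ p (hs hp))).trans (hballD p (hs hp)))
  have hclosU : ∀ s : Finset E, closure (⋃ p ∈ (s : Set E), ball p r)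
      ⊆ ⋃ p ∈ (s : Set E), closedBall p r := by
    intro s
    apply closure_minimal
    · exact iUnion₂_mono fun p hp => ball_subset_closedBall
    · exact (s.finite_toSet).isClosed_biUnion fun p hp => isClosed_closedBall
  have hfiber_in : ∀ s : Finset E, ↑s ⊆ S → ∀ z ∈ closure (⋃ p ∈ (s : Set E), ball p r),
      g z = c → z ∈ ⋃ p ∈ (s : Set E), ball p r := by
    intro s hs z hz hgz
    obtain ⟨p, hp, hzp⟩ := mem_iUnion₂.mp (hclosU s hz)
    have hzD : z ∈ D := ((closedBall_subset_closedBall (hrδ p (hs hp))).trans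
      (hballD p (hs hp))) hzp
    have hzS : z ∈ S := ⟨subset_closure hzD, hgz⟩
    have hzp2 : z ∈ closedBall p (δ p) := closedBall_subset_closedBall (hrδ p (hs hp)) hzp
    have : z = p := hiso p (hs hp) z hzp2 hgz
    subst this
    exact mem_biUnion hp (mem_ball_self hr0)
  -- additivity over the balls, by induction
  have hsum : ∀ s : Finset E, ↑s ⊆ S → 𝒟.deg g (⋃ p ∈ (s : Set E), ball p r) c = s.card := by
    intro s
    induction s using Finset.induction_on with
    | empty =>
      intro _
      simp only [Finset.coe_empty, Set.biUnion_empty, Finset.card_empty, Nat.cast_zero]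
      exact 𝒟.deg_empty g c
    | @insert q s hq ih =>
      intro hsub
      have hqS : q ∈ S := hsub (by simp)
      have hsS : ↑s ⊆ S := fun p hp => hsub (by simp [hp])
      have hunion : (⋃ p ∈ (↑(insert q s) : Set E), ball p r)
          = ball q r ∪ ⋃ p ∈ (s : Set E), ball p r := by
        rw [Finset.coe_insert, Set.biUnion_insert]
      have hdisj : Disjoint (ball q r) (⋃ p ∈ (s : Set E), ball p r) := by
        apply Set.disjoint_iUnion₂_right.mpr
        intro p hp
        have hne : q ≠ p := fun h => hq (h ▸ hp)
        apply ball_disjoint_ball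
        have := hrdist q hqS p (hsS hp) hne
        linarith
      have hadd := 𝒟.additivity g (⋃ p ∈ (↑(insert q s) : Set E), ball p r) (ball q r)
        (⋃ p ∈ (s : Set E), ball p r) c
        (isOpen_biUnion fun _ _ => isOpen_ball)
        (hDbdd.subset (hU'D _ hsub))
        (hgc.mono (closure_minimal ((hU'D _ hsub).trans subset_closure) isClosed_closure))
        isOpen_ball (isOpen_biUnion fun _ _ => isOpen_ball)
        (by rw [hunion]; exact Set.subset_union_left)
        (by rw [hunion]; exact Set.subset_union_right)
        hdisj
        (by
          rintro ⟨z, ⟨hz1, hz2⟩, hgz⟩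
          apply hz2
          rw [← hunion]
          exact hfiber_in _ hsub z hz1 hgz)
      rw [hadd, hloc q hqS, ih hsS, Finset.card_insert_of_notMem hq]
      push_cast
      ring
  -- conclusion
  have hTS : (↑hSfin.toFinset : Set E) = S := hSfin.coe_toFinset
  have htop := 𝒟.additivity g D (⋃ p ∈ (↑hSfin.toFinset : Set E), ball p r) ∅ c
    hDopen hDbdd hgc (isOpen_biUnion fun _ _ => isOpen_ball) isOpen_empty
    (hU'D _ hTS.le) (empty_subset D) (Set.disjoint_empty _)
    (by
      rintro ⟨z, ⟨hz1, hz2⟩, hgz⟩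
      apply hz2
      have hzS : z ∈ S := ⟨hz1, hgz⟩
      apply Set.mem_union_left
      exact mem_biUnion (show z ∈ (↑hSfin.toFinset : Set E) from hTS.symm ▸ hzS)
        (mem_ball_self hr0))
  rw [step0, htop, 𝒟.deg_empty, add_zero, hsum hSfin.toFinset hTS.le]
  exact Int.natCast_nonneg _

end Main

end BrouwerDegreeTheory

/-- If `D ⊂ ℂ^N` is a bounded domain and `Φ : bD → ℂ^N \ {0}` is a continuous map which
extends holomorphically through `D`, then `deg Φ ≥ 0`. -/
theorem degree_nonneg_of_holomorphic_extension
    (N : ℕ)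
    (D : Set (EuclideanSpace ℂ (Fin N)))
    (hDopen : IsOpen D) (hDbdd : IsBounded D) (hDconn : IsConnected D)
    (Φ : EuclideanSpace ℂ (Fin N) → EuclideanSpace ℂ (Fin N))
    (hΦcont : ContinuousOn Φ (frontier D))
    (hΦne : ∀ z ∈ frontier D, Φ z ≠ 0)
    (hext : ExtendsHolomorphically Φ D)
    (𝒟 : BrouwerDegreeTheory (EuclideanSpace ℂ (Fin N))) :
    ∀ F : EuclideanSpace ℂ (Fin N) → EuclideanSpace ℂ (Fin N),
      ContinuousOn F (closure D) → (∀ z ∈ frontier D, F z = Φ z) →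
      0 ≤ 𝒟.deg F D 0 := by
  intro F hFc hFb
  obtain ⟨g, hgc, hgd, hgb⟩ := hext
  rcases subsingleton_or_nontrivial (EuclideanSpace ℂ (Fin N)) with hsub | hnt
  · -- the space is trivial : `F` is the identity and `0 ∈ D`
    have hF : F = id := funext fun z => Subsingleton.elim _ _
    obtain ⟨z, hz⟩ := hDconn.nonempty
    have h0 : (0 : EuclideanSpace ℂ (Fin N)) ∈ D := by
      rwa [Subsingleton.elim z 0] at hz
    rw [hF, 𝒟.normalization D 0 hDopen hDbdd h0]
    norm_num
  · -- the boundary is nonempty and `‖g‖` has a positive minimum on it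
    have hfrne : (frontier D).Nonempty := by
      by_contra h
      rw [Set.not_nonempty_iff_eq_empty] at h
      have hclosed : IsClosed D := by
        apply isClosed_of_closure_subset
        intro z hz
        by_cases hzD : z ∈ D
        · exact hzD
        · exact absurd (show z ∈ frontier D from by
            rw [hDopen.frontier_eq]; exact ⟨hz, hzD⟩) (by simp [h])
      have huniv : D = univ := IsClopen.eq_univ ⟨hclosed, hDopen⟩ hDconn.nonempty
      exact NormedSpace.unbounded_univ ℝ (EuclideanSpace ℂ (Fin N)) (huniv ▸ hDbdd)
    have hfrc : IsCompact (frontier D) := IsCompact.of_isClosed_subset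
      hDbdd.isCompact_closure isClosed_frontier frontier_subset_closure
    obtain ⟨z₀, hz₀, hmin⟩ := hfrc.exists_isMinOn hfrne
      ((hgc.mono frontier_subset_closure).norm)
    have hεpos : 0 < ‖g z₀‖ := by
      rw [hgb z₀ hz₀]
      exact norm_pos_iff.mpr (hΦne z₀ hz₀)
    have hfrg : ∀ z ∈ frontier D, ‖g z₀‖ ≤ ‖g z‖ := fun z hz => hmin hz
    -- `F` and `g` agree on the boundary, hence have the same degree
    have hFg : 𝒟.deg F D 0 = 𝒟.deg g D 0 := by
      apply 𝒟.deg_eq_of_linear_homotopy hDopen hDbdd hFc hgc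
      intro t ht z hz hEq
      have h1 : (1 - t) • F z + t • g z = Φ z := by
        rw [hFb z hz, hgb z hz]; module
      exact hΦne z hz (h1.symm.trans hEq)
    rw [hFg]
    exact BrouwerDegreeTheory.deg_nonneg_of_holo 𝒟 hDopen hDbdd hgc hgd hεpos hfrg

end
end

section
/- Let N ≥ 2, let A = (A₁,…,A_N) : ℂ^N → ℂ^N be an ℝ-linear map, and suppose A₁(ζ,0,…,0) = αζ + β·conj(ζ) for all ζ ∈ ℂ, where α, β ∈ ℂ and β ≠ 0. Then there exists T > 0 such that for every t ∈ [0,1] the ℝ-linear map z ↦ (β·conj(z₁), Tz₂ + tA₂(z), …, Tz_N + tA_N(z)) from ℂ^N to ℂ^N is invertible and reverses orientation, i.e., has negative determinant when regarded as an ℝ-linear map of ℝ^{2N}. -/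
noncomputable section

open LinearMap Complex

theorem my_det_block_lower {V W : Type*} [AddCommGroup V] [Module ℝ V] [AddCommGroup W]
    [Module ℝ W] [FiniteDimensional ℝ V] [FiniteDimensional ℝ W]
    (B : V →ₗ[ℝ] V) (C : V →ₗ[ℝ] W) (D : W →ₗ[ℝ] W) :
    LinearMap.det ((B ∘ₗ fst ℝ V W).prod (C ∘ₗ fst ℝ V W + D ∘ₗ snd ℝ V W))
      = LinearMap.det B * LinearMap.det D := by
  classical
  let bV := Module.finBasis ℝ V
  let bW := Module.finBasis ℝ W
  let b := bV.prod bW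
  set f := (B ∘ₗ fst ℝ V W).prod (C ∘ₗ fst ℝ V W + D ∘ₗ snd ℝ V W) with hf
  have h : LinearMap.toMatrix b b f =
      Matrix.fromBlocks (LinearMap.toMatrix bV bV B) 0 (LinearMap.toMatrix bV bW C)
        (LinearMap.toMatrix bW bW D) := by
    ext (i | i) (j | j) <;>
      simp [b, LinearMap.toMatrix_apply, hf, Module.Basis.prod_apply, Module.Basis.prod_repr_inl,
        Module.Basis.prod_repr_inr, Matrix.fromBlocks]
  rw [← LinearMap.det_toMatrix b, h, Matrix.det_fromBlocks_zero₁₂,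
    LinearMap.det_toMatrix, LinearMap.det_toMatrix]

theorem my_det_beta_conj (β : ℂ) :
    LinearMap.det (β • (Complex.conjAe.toLinearMap : ℂ →ₗ[ℝ] ℂ)) = - Complex.normSq β := by
  rw [← LinearMap.det_toMatrix Complex.basisOneI]
  have h : LinearMap.toMatrix Complex.basisOneI Complex.basisOneI
      (β • (Complex.conjAe.toLinearMap : ℂ →ₗ[ℝ] ℂ)) = !![β.re, β.im; β.im, -β.re] := by
    ext i j
    fin_cases i <;> fin_cases j <;>
      simp [LinearMap.toMatrix_apply, Complex.coe_basisOneI_repr, Complex.coe_basisOneI,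
        Complex.mul_re, Complex.mul_im]
  rw [h, Matrix.det_fin_two_of, Complex.normSq_apply]
  ring

theorem my_exists_T_pos {W : Type*} [NormedAddCommGroup W] [NormedSpace ℝ W]
    [FiniteDimensional ℝ W] (B : W →ₗ[ℝ] W) :
    ∃ T : ℝ, 0 < T ∧ ∀ t ∈ Set.Icc (0 : ℝ) 1,
      0 < LinearMap.det (T • (LinearMap.id : W →ₗ[ℝ] W) + t • B) := by
  classical
  set Bc := LinearMap.toContinuousLinearMap B with hBc
  set T : ℝ := ‖Bc‖ + 1 with hTdef
  have hT : 0 < T := by positivity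
  refine ⟨T, hT, ?_⟩
  have hbij : ∀ s ∈ Set.Icc (0 : ℝ) 1,
      Function.Bijective ⇑(T • (LinearMap.id : W →ₗ[ℝ] W) + s • B) := by
    intro s hs
    have hnorm : ‖(s / T) • Bc‖ < 1 := by
      rw [norm_smul, Real.norm_eq_abs, _root_.abs_of_nonneg (div_nonneg hs.1 hT.le),
        div_mul_eq_mul_div, div_lt_one hT]
      nlinarith [norm_nonneg Bc, hs.2]
    have hv : IsUnit ((1 : W →L[ℝ] W) + (s / T) • Bc) := by
      exact ⟨Units.oneSub (-((s / T) • Bc)) (by simpa using hnorm),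
        by rw [Units.val_oneSub, sub_neg_eq_add]⟩
    have h1 : IsUnit ((algebraMap ℝ (W →L[ℝ] W)) T) :=
      (isUnit_iff_ne_zero.2 hT.ne').map (algebraMap ℝ (W →L[ℝ] W))
    have h2 := h1.mul hv
    rw [← Algebra.smul_def] at h2
    have heq : (T : ℝ) • ((1 : W →L[ℝ] W) + (s / T) • Bc) = T • (1 : W →L[ℝ] W) + s • Bc := by
      rw [smul_add, smul_smul, mul_div_cancel₀ _ hT.ne']
    rw [heq] at h2
    obtain ⟨u, hu_eq⟩ := h2
    have := (ContinuousLinearEquiv.ofUnit u).bijective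
    have hcoe : ⇑(ContinuousLinearEquiv.ofUnit u) = ⇑(T • (LinearMap.id : W →ₗ[ℝ] W) + s • B) := by
      funext w
      have : (u : W →L[ℝ] W) w = (T • (1 : W →L[ℝ] W) + s • Bc) w := by rw [hu_eq]
      change (u : W →L[ℝ] W) w = _
      simpa [hBc] using this
    rwa [hcoe] at this
  have hne : ∀ s ∈ Set.Icc (0 : ℝ) 1,
      LinearMap.det (T • (LinearMap.id : W →ₗ[ℝ] W) + s • B) ≠ 0 := by
    intro s hs hdet
    have := LinearMap.bot_lt_ker_of_det_eq_zero hdet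
    rw [LinearMap.ker_eq_bot.2 (hbij s hs).injective] at this
    exact lt_irrefl _ this
  -- continuity via matrices
  let bW := Module.finBasis ℝ W
  let MB := LinearMap.toMatrix bW bW B
  have hdet_eq : ∀ s : ℝ, LinearMap.det (T • (LinearMap.id : W →ₗ[ℝ] W) + s • B)
      = Matrix.det (T • (1 : Matrix _ _ ℝ) + s • MB) := by
    intro s
    rw [← LinearMap.det_toMatrix bW]
    congr 1
    rw [map_add, map_smul, map_smul, LinearMap.toMatrix_id]
  have hcont : Continuous fun s : ℝ => Matrix.det (T • (1 : Matrix _ _ ℝ) + s • MB) := by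
    apply Continuous.matrix_det
    fun_prop
  have hg0 : 0 < Matrix.det (T • (1 : Matrix (Fin (Module.finrank ℝ W)) _ ℝ) + (0:ℝ) • MB) := by
    rw [zero_smul, add_zero, Matrix.det_smul, Matrix.det_one, mul_one]
    exact pow_pos hT _
  intro t ht
  by_contra hle
  push_neg at hle
  have hne_t := hne t ht
  rw [hdet_eq] at hne_t hle
  have hlt : Matrix.det (T • (1 : Matrix _ _ ℝ) + t • MB) < 0 := lt_of_le_of_ne hle hne_t
  have hIVT := intermediate_value_Icc' ht.1 (hcont.continuousOn (s := Set.Icc 0 t))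
  have h0mem : (0 : ℝ) ∈ Set.Icc (Matrix.det (T • (1 : Matrix _ _ ℝ) + t • MB))
      (Matrix.det (T • (1 : Matrix _ _ ℝ) + (0:ℝ) • MB)) := ⟨hlt.le, hg0.le⟩
  obtain ⟨s, hs_mem, hs_eq⟩ := hIVT h0mem
  have hs01 : s ∈ Set.Icc (0 : ℝ) 1 := ⟨hs_mem.1, hs_mem.2.trans ht.2⟩
  have := hne s hs01
  rw [hdet_eq] at this
  exact this hs_eq



/-- **Key step of the proof of Proposition 5.3.** Let `A = (A₁,…,A_N) : ℂ^N → ℂ^N`, `N ≥ 2`, be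
an `ℝ`-linear map with `A₁(ζ,0,…,0) = αζ + β·conj ζ` for all `ζ ∈ ℂ`, where `β ≠ 0`. Then
there is `T > 0` such that for each `t ∈ [0,1]` the `ℝ`-linear map
`z ↦ (β·conj z₁, Tz₂ + tA₂(z), …, Tz_N + tA_N(z))` is invertible and reverses orientation,
i.e. has negative determinant as an `ℝ`-linear map of `ℝ^{2N}`. -/
theorem exists_orientation_reversing_homotopy
    (N : ℕ) (hN : 2 ≤ N)
    (A : EuclideanSpace ℂ (Fin N) →ₗ[ℝ] EuclideanSpace ℂ (Fin N))
    (α β : ℂ) (hβ : β ≠ 0)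
    (hA1 : ∀ ζ : ℂ,
      A (WithLp.toLp 2 (fun i => if i = (⟨0, by omega⟩ : Fin N) then ζ else 0) : EuclideanSpace ℂ (Fin N))
        (⟨0, by omega⟩ : Fin N) = α * ζ + β * starRingEnd ℂ ζ) :
    ∃ T : ℝ, 0 < T ∧ ∀ t ∈ Set.Icc (0 : ℝ) 1,
      ∃ M : EuclideanSpace ℂ (Fin N) →ₗ[ℝ] EuclideanSpace ℂ (Fin N),
        (∀ (z : EuclideanSpace ℂ (Fin N)) (i : Fin N),
          M z i = if i = (⟨0, by omega⟩ : Fin N)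
            then β * starRingEnd ℂ (z (⟨0, by omega⟩ : Fin N))
            else (T : ℂ) * z i + (t : ℂ) * A z i) ∧
        Function.Bijective ⇑M ∧ LinearMap.det M < 0 := by
  classical
  set i0 : Fin N := ⟨0, by omega⟩ with hi0
  set E := EuclideanSpace ℂ (Fin N) with hE
  set W := ({i : Fin N // ¬ i = i0} → ℂ) with hW
  let e : E ≃ₗ[ℝ] ℂ × W :=
    { toFun := fun z => (z i0, fun i => z i.1)
      map_add' := fun x y => rfl
      map_smul' := fun c x => rfl
      invFun := fun p => WithLp.toLp 2 (fun i => if h : i = i0 then p.1 else p.2 ⟨i, h⟩)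
      left_inv := fun z => by
        ext i
        by_cases h : i = i0
        · subst h; simp
        · simp [h]
      right_inv := fun p => by
        refine Prod.ext ?_ ?_
        · simp
        · funext i
          simp [i.2] }
  let Bβ : ℂ →ₗ[ℝ] ℂ := β • (Complex.conjAe.toLinearMap : ℂ →ₗ[ℝ] ℂ)
  let P : E →ₗ[ℝ] W :=
    { toFun := fun z i => z i.1, map_add' := fun _ _ => rfl, map_smul' := fun _ _ => rfl }
  let ι : W →ₗ[ℝ] E := e.symm.toLinearMap ∘ₗ LinearMap.inr ℝ ℂ W
  let ι₁ : ℂ →ₗ[ℝ] E := e.symm.toLinearMap ∘ₗ LinearMap.inl ℝ ℂ W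
  let B₀ : W →ₗ[ℝ] W := P ∘ₗ A ∘ₗ ι
  obtain ⟨T, hT, hTpos⟩ := my_exists_T_pos B₀
  refine ⟨T, hT, ?_⟩
  intro t ht
  let C : ℂ →ₗ[ℝ] W := t • (P ∘ₗ A ∘ₗ ι₁)
  let D : W →ₗ[ℝ] W := T • LinearMap.id + t • B₀
  let f : (ℂ × W) →ₗ[ℝ] (ℂ × W) :=
    (Bβ ∘ₗ LinearMap.fst ℝ ℂ W).prod (C ∘ₗ LinearMap.fst ℝ ℂ W + D ∘ₗ LinearMap.snd ℝ ℂ W)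
  let M : E →ₗ[ℝ] E := e.symm.toLinearMap ∘ₗ f ∘ₗ e.toLinearMap
  have hdetM : LinearMap.det M = LinearMap.det f := by
    have h := LinearMap.det_conj f e.symm
    simpa using h
  have hdetf : LinearMap.det f = (- Complex.normSq β) * LinearMap.det D := by
    rw [my_det_block_lower Bβ C D, my_det_beta_conj]
  have hDpos : 0 < LinearMap.det D := hTpos t ht
  have hMneg : LinearMap.det M < 0 := by
    rw [hdetM, hdetf]
    exact mul_neg_of_neg_of_pos (neg_lt_zero.2 (Complex.normSq_pos.2 hβ)) hDpos
  have hMbij : Function.Bijective ⇑M := by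
    have hne : LinearMap.det M ≠ 0 := ne_of_lt hMneg
    have := (LinearMap.equivOfDetNeZero M hne).bijective
    exact this
  refine ⟨M, ?_, hMbij, hMneg⟩
  intro z i
  have hMz : M z i = if h : i = i0 then (f (e z)).1 else (f (e z)).2 ⟨i, h⟩ := rfl
  rw [hMz]
  by_cases h : i = i0
  · rw [dif_pos h, if_pos h]
    show Bβ (z i0) = β * starRingEnd ℂ (z i0)
    simp [Bβ]
  · rw [dif_neg h, if_neg h]
    have hzz : ι₁ (z i0) + ι (fun j : {i : Fin N // ¬ i = i0} => z j.1) = z := by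
      have h1 : ι₁ (z i0) + ι (fun j : {i : Fin N // ¬ i = i0} => z j.1)
          = e.symm ((z i0, 0) + ((0 : ℂ), fun j : {i : Fin N // ¬ i = i0} => z j.1)) := by
        rw [map_add]; rfl
      rw [h1]
      have h2 : ((z i0 : ℂ), (0 : W)) + ((0 : ℂ), fun j : {i : Fin N // ¬ i = i0} => z j.1)
          = e z := by
        refine Prod.ext ?_ ?_ <;> simp [e] <;> rfl
      rw [h2, e.symm_apply_apply]
    show C (z i0) ⟨i, h⟩ + D (fun j : {i : Fin N // ¬ i = i0} => z j.1) ⟨i, h⟩ = _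
    have hC : C (z i0) ⟨i, h⟩ = t • (A (ι₁ (z i0)) i) := rfl
    have hD : D (fun j : {i : Fin N // ¬ i = i0} => z j.1) ⟨i, h⟩
        = T • z i + t • (A (ι (fun j : {i : Fin N // ¬ i = i0} => z j.1)) i) := rfl
    rw [hC, hD]
    have h3 : A z = A (ι₁ (z i0)) + A (ι fun j : {i : Fin N // ¬ i = i0} => z ↑j) := by
      rw [← map_add, hzz]
    have hsum : A (ι₁ (z i0)) i + A (ι fun j : {i : Fin N // ¬ i = i0} => z ↑j) i = A z i := by
      rw [h3]; rfl
    simp only [Complex.real_smul]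
    rw [← hsum]
    ring

end
end

section
/- Let s be a nonconstant complex polynomial in one variable, let a ∈ ℂ and r > 0. Then there exists b ∈ ℂ such that the function ζ ↦ conj(s(ζ − a)) − b has no zeros on the circle {ζ ∈ ℂ : |ζ − a| = r} and the change of argument of ζ ↦ conj(s(ζ − a)) − b along this circle (traversed counterclockwise), equivalently 2π times the winding number of this loop around 0, is negative. -/
open Real

noncomputable section

section Helpers
open Real Polynomial



lemma exists_good_value (q : Polynomial ℂ) (hq : 0 < q.natDegree) (r : ℝ) (hr : 0 < r) :
    ∃ b : ℂ, (∀ w : ℂ, ‖w‖ = r → q.eval w ≠ b) ∧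
      ∃ w : ℂ, ‖w‖ < r ∧ q.eval w = b := by
  have hanal : AnalyticOnNhd ℂ (fun z => q.eval z) (Metric.ball (0:ℂ) r) :=
    fun z _ => (AnalyticOnNhd.eval_polynomial (𝕜 := ℂ) q z (Set.mem_univ z))
  have hU : IsOpen ((fun z => q.eval z) '' Metric.ball (0:ℂ) r) := by
    rcases hanal.is_constant_or_isOpen (convex_ball 0 r).isPreconnected with ⟨w, hw⟩ | h
    · exfalso
      have hball : (Metric.ball (0:ℂ) r).Infinite := by
        have h1 : (Set.Ioo (0:ℝ) (r/2)).Infinite := Set.Ioo_infinite (by linarith)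
        have h2 := h1.image (Set.injOn_of_injective Complex.ofReal_injective)
        refine h2.mono ?_
        rintro _ ⟨x, hx, rfl⟩
        simp only [Metric.mem_ball, dist_zero_right, Complex.norm_real, Real.norm_eq_abs]
        rw [abs_of_pos hx.1]; linarith [hx.2]
      have h0 : q - C w = 0 := by
        apply Polynomial.eq_zero_of_infinite_isRoot
        apply hball.mono
        intro z hz
        simp [Polynomial.IsRoot, hw z hz]
      have hqc : q = C w := by
        have := sub_eq_zero.mp h0; exact this
      rw [hqc] at hq; simp at hq
    · exact h _ Set.Subset.rfl Metric.isOpen_ball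
  -- sphere image is null
  have hdiff : DifferentiableOn ℝ (fun z => q.eval z) (Metric.sphere (0:ℂ) r) := by
    intro z _
    exact (q.differentiable.restrictScalars ℝ).differentiableAt.differentiableWithinAt
  have hnull : MeasureTheory.volume ((fun z => q.eval z) '' Metric.sphere (0:ℂ) r) = 0 :=
    MeasureTheory.addHaar_image_eq_zero_of_differentiableOn_of_addHaar_eq_zero
      MeasureTheory.volume hdiff (MeasureTheory.Measure.addHaar_sphere _ _ _)
  have hpos : 0 < MeasureTheory.volume ((fun z => q.eval z) '' Metric.ball (0:ℂ) r) :=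
    hU.measure_pos _ (Set.Nonempty.image _ ⟨0, Metric.mem_ball_self hr⟩)
  have hne : ∃ b, b ∈ ((fun z => q.eval z) '' Metric.ball (0:ℂ) r) \
      ((fun z => q.eval z) '' Metric.sphere (0:ℂ) r) := by
    by_contra hcon
    push_neg at hcon
    have hsub : ((fun z => q.eval z) '' Metric.ball (0:ℂ) r) ⊆
        ((fun z => q.eval z) '' Metric.sphere (0:ℂ) r) := by
      intro b hb
      by_contra hb2
      exact hcon b ⟨hb, hb2⟩
    have := MeasureTheory.measure_mono (μ := MeasureTheory.volume) hsub
    rw [hnull] at this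
    exact absurd (le_antisymm this (by simp)) (ne_of_gt hpos)
  obtain ⟨b, ⟨⟨w0, hw0, rfl⟩, hb2⟩⟩ := hne
  refine ⟨q.eval w0, ?_, w0, ?_, rfl⟩
  · intro w hwr heq
    exact hb2 ⟨w, by simpa using hwr, heq⟩
  · simpa using hw0


def philift (r : ℝ) (z : ℂ) (t : ℝ) : ℝ :=
  if ‖z‖ < r then
    -t + (Complex.log (1 - z * Complex.exp (Complex.I * t) / r)).im
  else (-z).arg + (Complex.log (1 - (r / z) * Complex.exp (-(Complex.I * t)))).im

lemma abs_exp_I_mul (t : ℝ) : ‖Complex.exp (Complex.I * t)‖ = 1 := by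
  rw [Complex.norm_exp]; simp [Complex.mul_re]

lemma abs_exp_neg_I_mul (t : ℝ) : ‖Complex.exp (-(Complex.I * t))‖ = 1 := by
  rw [Complex.norm_exp]; simp [Complex.mul_re]

lemma exp_decomp (x : ℂ) :
    Complex.exp x = (Real.exp x.re : ℂ) * Complex.exp (Complex.I * (x.im : ℂ)) := by
  conv_lhs => rw [← Complex.re_add_im x]
  rw [Complex.exp_add, Complex.ofReal_exp, mul_comm (x.im : ℂ) Complex.I]

lemma factor_eq (r : ℝ) (hr : 0 < r) (z : ℂ) (hz : ‖z‖ ≠ r) (t : ℝ) :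
    (r : ℂ) * Complex.exp (-(Complex.I * t)) - z =
      (‖(r : ℂ) * Complex.exp (-(Complex.I * t)) - z‖ : ℂ) *
        Complex.exp (Complex.I * philift r z t) := by
  rcases lt_or_gt_of_ne hz with hlt | hgt
  · set u : ℂ := z * Complex.exp (Complex.I * t) / r with hu_def
    have hau : ‖u‖ < 1 := by
      rw [hu_def, norm_div, norm_mul, abs_exp_I_mul, Complex.norm_real, Real.norm_eq_abs, abs_of_pos hr]
      rw [div_lt_one hr]; simpa using hlt
    have hne : (1 : ℂ) - u ≠ 0 := by
      intro h
      have : u = 1 := by linear_combination -h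
      rw [this] at hau; simp at hau
    have hlog : Complex.exp (Complex.log (1 - u)) = 1 - u := Complex.exp_log hne
    have hfact : (r : ℂ) * Complex.exp (-(Complex.I * t)) - z =
        (r : ℂ) * Complex.exp (-(Complex.I * t)) * (1 - u) := by
      have hrne : (r:ℂ) ≠ 0 := by exact_mod_cast hr.ne'
      rw [hu_def, Complex.exp_neg]
      field_simp
    have hphi : philift r z t = -t + (Complex.log (1 - u)).im := by
      rw [philift, if_pos hlt]
    have habs1 : ‖1 - u‖ = Real.exp ((Complex.log (1 - u)).re) := by
      conv_lhs => rw [← hlog]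
      rw [Complex.norm_exp]
    have habs : ‖(r : ℂ) * Complex.exp (-(Complex.I * t)) - z‖ =
        r * Real.exp ((Complex.log (1 - u)).re) := by
      rw [hfact, norm_mul, norm_mul, Complex.norm_real, Real.norm_eq_abs, abs_of_pos hr, abs_exp_neg_I_mul, habs1]
      ring
    have h2 : ((Real.exp ((Complex.log (1 - u)).re) : ℝ) : ℂ) *
        Complex.exp (Complex.I * (((Complex.log (1 - u)).im : ℝ) : ℂ)) = 1 - u := by
      rw [← exp_decomp, hlog]
    rw [habs, hphi, hfact]
    push_cast
    push_cast at h2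
    rw [mul_add Complex.I, Complex.exp_add]
    rw [show Complex.I * -(t:ℂ) = -(Complex.I * t) by ring]
    linear_combination (-((r : ℂ) * Complex.exp (-(Complex.I * t)))) * h2
  · have hz0 : z ≠ 0 := by
      intro h; rw [h] at hgt; simp at hgt; linarith
    set v : ℂ := (r / z) * Complex.exp (-(Complex.I * t)) with hv_def
    have hav : ‖v‖ < 1 := by
      rw [hv_def, norm_mul, norm_div, abs_exp_neg_I_mul, Complex.norm_real, Real.norm_eq_abs, abs_of_pos hr]
      rw [mul_one, div_lt_one (norm_pos_iff.mpr hz0)]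
      exact hgt
    have hne : (1 : ℂ) - v ≠ 0 := by
      intro h
      have : v = 1 := by linear_combination -h
      rw [this] at hav; simp at hav
    have hlog : Complex.exp (Complex.log (1 - v)) = 1 - v := Complex.exp_log hne
    have hfact : (r : ℂ) * Complex.exp (-(Complex.I * t)) - z = (-z) * (1 - v) := by
      rw [hv_def]
      field_simp
      ring
    have hphi : philift r z t = (-z).arg + (Complex.log (1 - v)).im := by
      rw [philift, if_neg (not_lt.mpr hgt.le)]
    have habs1 : ‖1 - v‖ = Real.exp ((Complex.log (1 - v)).re) := by
      conv_lhs => rw [← hlog]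
      rw [Complex.norm_exp]
    have habs : ‖(r : ℂ) * Complex.exp (-(Complex.I * t)) - z‖ =
        ‖z‖ * Real.exp ((Complex.log (1 - v)).re) := by
      rw [hfact, norm_mul, norm_neg, habs1]
    have h2 : ((Real.exp ((Complex.log (1 - v)).re) : ℝ) : ℂ) *
        Complex.exp (Complex.I * (((Complex.log (1 - v)).im : ℝ) : ℂ)) = 1 - v := by
      rw [← exp_decomp, hlog]
    have hz' : ((‖z‖ : ℝ) : ℂ) * Complex.exp (Complex.I * (((-z).arg : ℝ) : ℂ)) = -z := by
      rw [mul_comm Complex.I]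
      rw [show ‖z‖ = ‖-z‖ by rw [norm_neg]]
      exact Complex.norm_mul_exp_arg_mul_I (-z)
    rw [habs, hphi, hfact]
    push_cast
    push_cast at h2
    rw [mul_add Complex.I, Complex.exp_add]
    linear_combination (-(((‖z‖ : ℝ) : ℂ) *
        Complex.exp (Complex.I * (((-z).arg : ℝ) : ℂ)))) * h2 - (1 - v) * hz'


noncomputable section part2
open Complex in
lemma one_sub_mem_slitPlane {w : ℂ} (h : ‖w‖ < 1) : (1 - w) ∈ Complex.slitPlane := by
  apply Complex.mem_slitPlane_iff.mpr
  left
  have := Complex.re_le_norm w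
  simp only [Complex.sub_re, Complex.one_re]
  linarith

lemma philift_continuous (r : ℝ) (hr : 0 < r) (z : ℂ) (hz : ‖z‖ ≠ r) :
    Continuous (philift r z) := by
  rcases lt_or_gt_of_ne hz with hlt | hgt
  · have heq : philift r z =
        fun t : ℝ => -t + (Complex.log (1 - z * Complex.exp (Complex.I * (t:ℂ)) / r)).im := by
      funext t; rw [philift, if_pos hlt]
    rw [heq]
    refine Continuous.add continuous_neg ?_
    rw [continuous_iff_continuousAt]; intro t
    have hcont : ContinuousAt (fun t : ℝ => 1 - z * Complex.exp (Complex.I * t) / r) t := by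
      fun_prop
    have hau : ‖z * Complex.exp (Complex.I * t) / r‖ < 1 := by
      rw [norm_div, norm_mul, abs_exp_I_mul, Complex.norm_real, Real.norm_eq_abs, abs_of_pos hr]
      rw [div_lt_one hr]; simpa using hlt
    have h1 : ContinuousAt (fun t : ℝ =>
        Complex.log (1 - z * Complex.exp (Complex.I * (t:ℂ)) / r)) t :=
      hcont.clog (one_sub_mem_slitPlane hau)
    exact Complex.continuous_im.continuousAt.comp h1
  · have hz0 : z ≠ 0 := by
      intro h; rw [h] at hgt; simp at hgt; linarith
    have heq : philift r z =
        fun t : ℝ => (-z).arg + (Complex.log (1 - ((r:ℂ) / z) * Complex.exp (-(Complex.I * (t:ℂ))))).im := by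
      funext t; rw [philift, if_neg (not_lt.mpr hgt.le)]
    rw [heq]
    refine Continuous.add continuous_const ?_
    rw [continuous_iff_continuousAt]; intro t
    have hcont : ContinuousAt (fun t : ℝ => 1 - ((r:ℂ) / z) * Complex.exp (-(Complex.I * t))) t := by
      fun_prop
    have hav : ‖(r:ℂ) / z * Complex.exp (-(Complex.I * t))‖ < 1 := by
      rw [norm_mul, norm_div, abs_exp_neg_I_mul, Complex.norm_real, Real.norm_eq_abs, abs_of_pos hr]
      rw [mul_one, div_lt_one (norm_pos_iff.mpr hz0)]
      exact hgt
    have h1 : ContinuousAt (fun t : ℝ =>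
        Complex.log (1 - ((r:ℂ) / z) * Complex.exp (-(Complex.I * (t:ℂ))))) t :=
      hcont.clog (one_sub_mem_slitPlane hav)
    exact Complex.continuous_im.continuousAt.comp h1

lemma exp_I_two_pi : Complex.exp (Complex.I * ((2 * π : ℝ) : ℂ)) = 1 := by
  push_cast
  rw [mul_comm]
  exact Complex.exp_two_pi_mul_I

lemma exp_neg_I_two_pi : Complex.exp (-(Complex.I * ((2 * π : ℝ) : ℂ))) = 1 := by
  rw [Complex.exp_neg, exp_I_two_pi, inv_one]

lemma philift_diff (r : ℝ) (z : ℂ) :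
    philift r z (2 * π) - philift r z 0 = if ‖z‖ < r then -(2 * π) else 0 := by
  by_cases hlt : ‖z‖ < r
  · rw [if_pos hlt, philift, philift, if_pos hlt, if_pos hlt, exp_I_two_pi]
    norm_num
  · rw [if_neg hlt, philift, philift, if_neg hlt, if_neg hlt, exp_neg_I_two_pi]
    norm_num

lemma multiset_exp_sum (m : Multiset ℂ) : Complex.exp m.sum = (m.map Complex.exp).prod := by
  induction m using Multiset.induction_on with
  | empty => simp
  | cons a s ih => simp [Complex.exp_add, ih]

lemma multiset_map_sum_sub {α : Type*} (m : Multiset α) (f g : α → ℝ) :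
    (m.map fun z => f z - g z).sum = (m.map f).sum - (m.map g).sum := by
  induction m using Multiset.induction_on with
  | empty => simp
  | cons a s ih => simp only [Multiset.map_cons, Multiset.sum_cons, ih]; ring

lemma multiset_map_sum_nonpos {α : Type*} (m : Multiset α) (f : α → ℝ)
    (h : ∀ z ∈ m, f z ≤ 0) : (m.map f).sum ≤ 0 := by
  induction m using Multiset.induction_on with
  | empty => simp
  | cons a s ih =>
    simp only [Multiset.map_cons, Multiset.sum_cons]
    have h1 := h a (Multiset.mem_cons_self a s)
    have h2 := ih fun z hz => h z (Multiset.mem_cons_of_mem hz)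
    linarith
end part2

noncomputable section part3
lemma loop_formula (P : Polynomial ℂ) (hP : P ≠ 0) (r : ℝ) (hr : 0 < r)
    (hroots : ∀ z ∈ P.roots, ‖z‖ ≠ r) (t : ℝ) :
    P.eval ((r:ℂ) * Complex.exp (-(Complex.I * t))) =
      (‖P.eval ((r:ℂ) * Complex.exp (-(Complex.I * t)))‖ : ℂ) *
        Complex.exp (Complex.I *
          ((P.leadingCoeff.arg + (P.roots.map (fun z => philift r z t)).sum : ℝ) : ℂ)) := by
  set w : ℂ := (r:ℂ) * Complex.exp (-(Complex.I * t)) with hw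
  have hfact : P.eval w = P.leadingCoeff * (P.roots.map (fun z => w - z)).prod := by
    conv_lhs => rw [(IsAlgClosed.splits P).eq_prod_roots]
    rw [Polynomial.eval_mul, Polynomial.eval_C, Polynomial.eval_multiset_prod, Multiset.map_map]
    simp [Function.comp_def]
  have hfac : ∀ z ∈ P.roots, w - z =
      ((‖w - z‖ : ℝ) : ℂ) * Complex.exp (Complex.I * philift r z t) :=
    fun z hz => factor_eq r hr z (hroots z hz) t
  have hsum : Complex.I * (((P.roots.map (fun z => philift r z t)).sum : ℝ) : ℂ) =
      (P.roots.map (fun z => Complex.I * ((philift r z t : ℝ) : ℂ))).sum := by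
    rw [Multiset.sum_map_mul_left]
    congr 1
    rw [show (((P.roots.map (fun z => philift r z t)).sum : ℝ) : ℂ) =
        Complex.ofRealHom ((P.roots.map (fun z => philift r z t)).sum) from rfl,
      map_multiset_sum, Multiset.map_map]
    rfl
  have e1 : (P.roots.map (fun z => w - z)).prod =
      (((P.roots.map (fun z => ‖w - z‖)).prod : ℝ) : ℂ) *
        Complex.exp (Complex.I * (((P.roots.map (fun z => philift r z t)).sum : ℝ) : ℂ)) := by
    rw [Multiset.map_congr rfl hfac, Multiset.prod_map_mul]
    congr 1
    · rw [show (((P.roots.map (fun z => ‖w - z‖)).prod : ℝ) : ℂ) =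
          Complex.ofRealHom ((P.roots.map (fun z => ‖w - z‖)).prod) from rfl,
        map_multiset_prod, Multiset.map_map]
      rfl
    · rw [hsum, multiset_exp_sum, Multiset.map_map]
      rfl
  have hA0 : (0:ℝ) ≤ ‖P.leadingCoeff‖ *
      (P.roots.map (fun z => ‖w - z‖)).prod := by
    apply mul_nonneg (norm_nonneg _)
    apply Multiset.prod_nonneg
    intro x hx
    obtain ⟨z, _, rfl⟩ := Multiset.mem_map.mp hx
    exact norm_nonneg _
  have hlc : P.leadingCoeff = ((‖P.leadingCoeff‖ : ℝ) : ℂ) *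
      Complex.exp (Complex.I * ((P.leadingCoeff.arg : ℝ) : ℂ)) := by
    rw [mul_comm Complex.I]
    exact (Complex.norm_mul_exp_arg_mul_I P.leadingCoeff).symm
  have hmain : P.eval w = (((‖P.leadingCoeff‖ *
        (P.roots.map (fun z => ‖w - z‖)).prod : ℝ)) : ℂ) *
      Complex.exp (Complex.I *
        ((P.leadingCoeff.arg + (P.roots.map (fun z => philift r z t)).sum : ℝ) : ℂ)) := by
    rw [hfact, e1]
    conv_lhs => rw [hlc]
    push_cast
    rw [mul_add Complex.I, Complex.exp_add]
    ring
  have habs : ‖P.eval w‖ = ‖P.leadingCoeff‖ *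
      (P.roots.map (fun z => ‖w - z‖)).prod := by
    rw [hmain, norm_mul, Complex.norm_real, Real.norm_eq_abs, abs_of_nonneg hA0, Complex.norm_exp]
    simp [Complex.mul_re]
  rw [habs, hmain]
end part3

noncomputable section part4
lemma multiset_continuous_sum {α : Type*} (m : Multiset α) (f : α → ℝ → ℝ)
    (h : ∀ z ∈ m, Continuous (f z)) :
    Continuous (fun t => (m.map (fun z => f z t)).sum) := by
  induction m using Multiset.induction_on with
  | empty => simpa using continuous_const
  | cons a s ih =>
    simp only [Multiset.map_cons, Multiset.sum_cons]
    exact (h a (Multiset.mem_cons_self a s)).add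
      (ih fun z hz => h z (Multiset.mem_cons_of_mem hz))

theorem conj_polynomial_negative_winding'
    (s : Polynomial ℂ) (hs : 0 < s.natDegree) (a : ℂ) (r : ℝ) (hr : 0 < r) :
    ∃ b : ℂ,
      (∀ ζ : ℂ, ‖ζ - a‖ = r →
        starRingEnd ℂ (Polynomial.eval (ζ - a) s) - b ≠ 0) ∧
      ∀ θ : ℝ → ℝ, ContinuousOn θ (Set.Icc 0 (2 * π)) →
        (∀ t ∈ Set.Icc 0 (2 * π),
          starRingEnd ℂ (Polynomial.eval ((r : ℂ) * Complex.exp (Complex.I * t)) s) - b =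
            ‖starRingEnd ℂ
              (Polynomial.eval ((r : ℂ) * Complex.exp (Complex.I * t)) s) - b‖ *
              Complex.exp (Complex.I * θ t)) →
        θ (2 * π) - θ 0 < 0 := by
  have hπ := Real.pi_pos
  set q : Polynomial ℂ := s.map (starRingEnd ℂ) with hq
  have hconj : ∀ x : ℂ, starRingEnd ℂ (s.eval x) = q.eval (starRingEnd ℂ x) := by
    intro x
    rw [hq, Polynomial.eval_map, Polynomial.eval₂_hom]
  have hqdeg : 0 < q.natDegree := by
    rw [hq, Polynomial.natDegree_map]; exact hs
  obtain ⟨b, hb1, w0, hw0r, hw0⟩ := exists_good_value q hqdeg r hr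
  set P : Polynomial ℂ := q - Polynomial.C b with hPdef
  have hPev : ∀ x : ℂ, P.eval x = q.eval x - b := by
    intro x; rw [hPdef]; simp
  have hP0 : P ≠ 0 := by
    intro h
    have : q = Polynomial.C b := by rw [hPdef] at h; linear_combination (norm := ring_nf) h
    rw [this] at hqdeg; simp at hqdeg
  have hProots : ∀ z ∈ P.roots, ‖z‖ ≠ r := by
    intro z hz hza
    have hroot : P.eval z = 0 := (Polynomial.mem_roots'.mp hz).2
    rw [hPev] at hroot
    exact hb1 z hza (sub_eq_zero.mp hroot)
  have hw0mem : w0 ∈ P.roots := by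
    rw [Polynomial.mem_roots']
    exact ⟨hP0, by rw [Polynomial.IsRoot, hPev, hw0, sub_self]⟩
  refine ⟨b, ?_, ?_⟩
  · intro ζ hζ
    rw [hconj]
    apply sub_ne_zero.mpr
    apply hb1
    rw [show starRingEnd ℂ (ζ - a) = (starRingEnd ℂ) (ζ - a) from rfl]
    rw [Complex.norm_conj]
    exact hζ
  · intro θ hθcont hθeq
    -- the loop in terms of P
    have hloop : ∀ t : ℝ,
        starRingEnd ℂ (s.eval ((r : ℂ) * Complex.exp (Complex.I * t))) - b =
          P.eval ((r : ℂ) * Complex.exp (-(Complex.I * t))) := by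
      intro t
      rw [hconj, hPev]
      congr 2
      rw [map_mul]
      congr 1
      · simp
      · rw [← Complex.exp_conj]
        congr 1
        simp
    set θ₀ : ℝ → ℝ :=
      fun t => P.leadingCoeff.arg + (P.roots.map (fun z => philift r z t)).sum with hθ₀def
    have hθ₀eq : ∀ t : ℝ,
        starRingEnd ℂ (s.eval ((r : ℂ) * Complex.exp (Complex.I * t))) - b =
          ‖starRingEnd ℂ (s.eval ((r : ℂ) * Complex.exp (Complex.I * t))) - b‖ *
            Complex.exp (Complex.I * θ₀ t) := by
      intro t
      rw [hloop t, hθ₀def]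
      exact loop_formula P hP0 r hr hProots t
    have hEne : ∀ t : ℝ,
        starRingEnd ℂ (s.eval ((r : ℂ) * Complex.exp (Complex.I * t))) - b ≠ 0 := by
      intro t
      rw [hloop t, hPev]
      apply sub_ne_zero.mpr
      apply hb1
      rw [norm_mul, Complex.norm_real, Real.norm_eq_abs, abs_of_pos hr, abs_exp_neg_I_mul, mul_one]
    -- continuity of θ₀
    have hθ₀cont : Continuous θ₀ := by
      rw [hθ₀def]
      exact continuous_const.add (multiset_continuous_sum _ _
        (fun z hz => philift_continuous r hr z (hProots z hz)))
    -- difference is a multiple of 2π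
    have hd : ∀ t ∈ Set.Icc 0 (2 * π), ∃ n : ℤ, θ t - θ₀ t = 2 * π * n := by
      intro t ht
      have h1 := hθeq t ht
      have h2 := hθ₀eq t
      have habsne : (‖starRingEnd ℂ
          (s.eval ((r : ℂ) * Complex.exp (Complex.I * t))) - b‖ : ℂ) ≠ 0 := by
        intro h
        apply hEne t
        rwa [Complex.ofReal_eq_zero, norm_eq_zero] at h
      have h3 : Complex.exp (Complex.I * θ t) = Complex.exp (Complex.I * θ₀ t) :=
        mul_left_cancel₀ habsne (h1.symm.trans h2)
      obtain ⟨n, hn⟩ := Complex.exp_eq_exp_iff_exists_int.mp h3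
      refine ⟨n, ?_⟩
      have h4 : Complex.I * (θ t : ℂ) = Complex.I * ((θ₀ t : ℝ) + 2 * π * n : ℝ) := by
        push_cast
        rw [hn]; ring
      have h5 : (θ t : ℂ) = ((θ₀ t + 2 * π * n : ℝ) : ℂ) :=
        mul_left_cancel₀ Complex.I_ne_zero h4
      have h6 : θ t = θ₀ t + 2 * π * n := by exact_mod_cast h5
      linarith
    -- θ₀ winds at least once clockwise
    have hθ₀diff : θ₀ (2 * π) - θ₀ 0 ≤ -(2 * π) := by
      rw [hθ₀def]
      simp only [add_sub_add_left_eq_sub]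
      rw [← multiset_map_sum_sub]
      have hcongr : (P.roots.map fun z => philift r z (2 * π) - philift r z 0) =
          P.roots.map fun z => if ‖z‖ < r then -(2 * π) else 0 :=
        Multiset.map_congr rfl fun z _ => philift_diff r z
      rw [hcongr]
      rw [← Multiset.cons_erase hw0mem, Multiset.map_cons, Multiset.sum_cons, if_pos hw0r]
      have hrest : ((P.roots.erase w0).map fun z =>
          if ‖z‖ < r then -(2 * π) else 0).sum ≤ 0 := by
        apply multiset_map_sum_nonpos
        intro z _
        split <;> linarith
      linarith
    -- lift difference constant via IVT
    obtain ⟨n0, hn0⟩ := hd 0 ⟨le_refl 0, by linarith⟩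
    obtain ⟨n1, hn1⟩ := hd (2 * π) ⟨by linarith, le_refl _⟩
    have hn01 : n0 = n1 := by
      by_contra hne
      set k : ℤ := min n0 n1 with hk
      set y : ℝ := 2 * π * k + π with hy
      have hdc : ContinuousOn (fun t => θ t - θ₀ t) (Set.Icc 0 (2 * π)) :=
        hθcont.sub hθ₀cont.continuousOn
      have h02 : (0:ℝ) ≤ 2 * π := by linarith
      have hIVT := intermediate_value_uIcc (a := (0:ℝ)) (b := 2 * π)
        (f := fun t => θ t - θ₀ t) (by rw [Set.uIcc_of_le h02]; exact hdc)
      have hymem : y ∈ Set.uIcc (θ 0 - θ₀ 0) (θ (2 * π) - θ₀ (2 * π)) := by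
        rw [hn0, hn1, Set.mem_uIcc]
        rcases le_total n0 n1 with hle | hle
        · left
          have hk0 : k = n0 := min_eq_left hle
          have hlt : n0 + 1 ≤ n1 := by omega
          have c1 : (n0:ℝ) ≤ n1 := by exact_mod_cast hle
          have c2 : (n0:ℝ) + 1 ≤ n1 := by exact_mod_cast hlt
          constructor <;> (rw [hy, hk0]; nlinarith)
        · right
          have hk0 : k = n1 := min_eq_right hle
          have hlt : n1 + 1 ≤ n0 := by omega
          have c2 : (n1:ℝ) + 1 ≤ n0 := by exact_mod_cast hlt
          constructor <;> (rw [hy, hk0]; nlinarith)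
      obtain ⟨t, ht, hty⟩ := hIVT hymem
      rw [Set.uIcc_of_le h02] at ht
      obtain ⟨m, hm⟩ := hd t ht
      have hty' : θ t - θ₀ t = y := hty
      rw [hm] at hty'
      have : (2 * (m - k) : ℝ) = 1 := by
        have : 2 * π * m = 2 * π * k + π := by linarith [hty', hy]
        push_cast
        nlinarith
      have : (2 * (m - k) : ℤ) = 1 := by exact_mod_cast this
      omega
    have hfinal : θ (2 * π) - θ 0 = θ₀ (2 * π) - θ₀ 0 := by
      have := hn0
      have := hn1
      rw [hn01] at hn0
      linarith
    linarith
end part4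

end Helpers

/-- **Observation in the proof of Proposition 5.4.** If `s` is a nonconstant complex
polynomial, `a ∈ ℂ` and `r > 0`, then there is `b ∈ ℂ` such that `ζ ↦ conj (s(ζ − a)) − b`
has no zeros on the circle `{ζ : |ζ − a| = r}` and the change of argument of this function
along the circle (traversed counterclockwise) is negative: for every continuous argument
lift `θ` on `[0, 2π]` of the loop `t ↦ conj (s(a + r·exp(i t) − a)) − b`, one has
`θ(2π) − θ(0) < 0` (equivalently, `2π` times the winding number around `0` is negative). -/
theorem conj_polynomial_negative_winding
    (s : Polynomial ℂ) (hs : 0 < s.natDegree) (a : ℂ) (r : ℝ) (hr : 0 < r) :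
    ∃ b : ℂ,
      (∀ ζ : ℂ, ‖ζ - a‖ = r →
        starRingEnd ℂ (Polynomial.eval (ζ - a) s) - b ≠ 0) ∧
      ∀ θ : ℝ → ℝ, ContinuousOn θ (Set.Icc 0 (2 * π)) →
        (∀ t ∈ Set.Icc 0 (2 * π),
          starRingEnd ℂ (Polynomial.eval ((r : ℂ) * Complex.exp (Complex.I * t)) s) - b =
            ((‖starRingEnd ℂ
              (Polynomial.eval ((r : ℂ) * Complex.exp (Complex.I * t)) s) - b‖ : ℝ) : ℂ) *
              Complex.exp (Complex.I * θ t)) →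
        θ (2 * π) - θ 0 < 0 := by
  exact conj_polynomial_negative_winding' s hs a r hr

end
end
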